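/- There exists a permutation matrix P ∈ GL_{2N+2}(ℝ) (namely the matrix of the cycle permuting the first N+1 indices cyclically and fixing the rest) such that for every (M,X,κ) ∈ G̃^J_N, the conjugate P·ι(M,X,κ)·P⁻¹ of the embedded matrix ι(M,X,κ) = [[I_N, X, κ], [0, M, −M·J₂·Xᵀ], [0, 0, I_N]] is symplectic, i.e. satisfies gᵀ·J_{2N+2}·g = J_{2N+2} where J_{2N+2} = [[0, −I_{N+1}], [I_{N+1}, 0]]. -/

import Mathlib

open Matrix Complex

noncomputable section

def J2 : Matrix (Fin 2) (Fin 2) ℝ := !![0, -1; 1, 0]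

/-- An element of the (centrally extended) Jacobi group data: a triple (M, X, κ). -/
structure JTriple (N : ℕ) where
  M : Matrix (Fin 2) (Fin 2) ℝ
  X : Matrix (Fin N) (Fin 2) ℝ
  κ : Matrix (Fin N) (Fin N) ℝ

/-- Membership in the centrally extended real Jacobi group `G̃^J_N`. -/
def JTriple.IsMem {N : ℕ} (g : JTriple N) : Prop :=
  g.M.det = 1 ∧ (g.κ + (2⁻¹ : ℝ) • (g.X * J2 * g.X.transpose)).IsSymm

/-- The embedding `ι` of `G̃^J_N` into (2N+2)×(2N+2) real matrices, with blocks of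
sizes N, 2, N: `[[I_N, X, κ], [0, M, −M·J₂·Xᵀ], [0, 0, I_N]]`. -/
def jIota {N : ℕ} (g : JTriple N) :
    Matrix (Fin N ⊕ (Fin 2 ⊕ Fin N)) (Fin N ⊕ (Fin 2 ⊕ Fin N)) ℝ :=
  fromBlocks 1 (fromCols g.X g.κ) 0
    (fromBlocks g.M (-(g.M * J2 * g.X.transpose)) 0 1)

/-- The standard symplectic form `J_{2N+2} = [[0, −I_{N+1}], [I_{N+1}, 0]]`. -/
def Jsymp (N : ℕ) : Matrix (Fin (N + 1) ⊕ Fin (N + 1)) (Fin (N + 1) ⊕ Fin (N + 1)) ℝ :=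
  fromBlocks 0 (-1) 1 0

lemma J2_mul_J2 : J2 * J2 = -1 := by
  ext i j; fin_cases i <;> fin_cases j <;>
    simp [J2, Matrix.mul_apply, Fin.sum_univ_succ, Matrix.one_apply]

lemma J2_transpose : J2.transpose = -J2 := by
  ext i j; fin_cases i <;> fin_cases j <;> simp [J2]

lemma conj_J2 (M : Matrix (Fin 2) (Fin 2) ℝ) (h : M.det = 1) :
    M.transpose * J2 * M = J2 := by
  rw [Matrix.det_fin_two] at h
  ext i j
  fin_cases i <;> fin_cases j <;>
    simp [Matrix.mul_apply, Fin.sum_univ_succ, J2, Matrix.transpose_apply] <;> linarith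

/-- The permutation of indices. -/
def jEquiv (N : ℕ) : (Fin N ⊕ (Fin 2 ⊕ Fin N)) ≃ (Fin (N + 1) ⊕ Fin (N + 1)) where
  toFun x := match x with
    | .inl a => .inl a.castSucc
    | .inr (.inl i) => if i = 0 then .inl (Fin.last N) else .inr (Fin.last N)
    | .inr (.inr b) => .inr b.castSucc
  invFun x := match x with
    | .inl a => if h : a = Fin.last N then .inr (.inl 0) else .inl (a.castPred h)
    | .inr b => if h : b = Fin.last N then .inr (.inl 1) else .inr (.inr (b.castPred h))
  left_inv x := by
    rcases x with a | i | b
    · simp [Fin.castSucc_lt_last a |>.ne]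
    · fin_cases i <;> simp
    · simp [Fin.castSucc_lt_last b |>.ne]
  right_inv x := by
    rcases x with a | b
    · by_cases h : a = Fin.last N <;> simp [h, (Fin.castSucc_lt_last _).ne]
    · by_cases h : b = Fin.last N <;> simp [h, (Fin.castSucc_lt_last _).ne]

/-- The pulled-back symplectic form in (N,2,N) block coordinates. -/
lemma reindex_Jsymp (N : ℕ) :
    (Matrix.reindex (jEquiv N).symm (jEquiv N).symm (Jsymp N)) =
      fromBlocks 0 (fromCols 0 (-1)) (fromRows 0 1) (fromBlocks J2 0 0 0) := by
  ext i j
  have key : ∀ i j, (Matrix.reindex (jEquiv N).symm (jEquiv N).symm (Jsymp N)) i j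
      = Jsymp N (jEquiv N i) (jEquiv N j) := by intro i j; simp
  rw [key]
  rcases i with a | i | a <;> rcases j with b | j | b
  · simp [jEquiv, Jsymp]
  · fin_cases j <;>
      simp [jEquiv, Jsymp, Matrix.one_apply, (Fin.castSucc_lt_last _).ne]
  · simp [jEquiv, Jsymp, Matrix.one_apply, Fin.castSucc_inj,
      Matrix.fromCols, Matrix.neg_apply, (Fin.castSucc_lt_last _).ne']
  · fin_cases i <;>
      simp [jEquiv, Jsymp, Matrix.one_apply, (Fin.castSucc_lt_last _).ne,
        (Fin.castSucc_lt_last _).ne', Matrix.fromRows_apply_inl]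
  · fin_cases i <;> fin_cases j <;>
      simp [jEquiv, Jsymp, Matrix.one_apply, J2]
  · fin_cases i <;>
      simp [jEquiv, Jsymp, Matrix.one_apply, (Fin.castSucc_lt_last _).ne']
  · simp [jEquiv, Jsymp, Matrix.one_apply, Fin.castSucc_inj,
      Matrix.fromRows_apply_inr]
  · fin_cases j <;>
      simp [jEquiv, Jsymp, Matrix.one_apply, (Fin.castSucc_lt_last _).ne]
  · simp [jEquiv, Jsymp]

lemma key_identity {N : ℕ} (g : JTriple N) (hg : g.IsMem) :
    (jIota g).transpose *
      (fromBlocks 0 (fromCols 0 (-1)) (fromRows 0 1) (fromBlocks J2 0 0 0)) * jIota g =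
      fromBlocks 0 (fromCols 0 (-1)) (fromRows 0 1) (fromBlocks J2 0 0 0) := by
  obtain ⟨M, X, κ⟩ := g
  obtain ⟨hdet, hsym⟩ := hg
  dsimp only at hdet hsym ⊢
  have hMJM : Mᵀ * J2 * M = J2 := conj_J2 M hdet
  have hMJM' : Mᵀ * (J2 * M) = J2 := by rw [← Matrix.mul_assoc]; exact hMJM
  have h2 : ∀ (A : Matrix (Fin N) (Fin 2) ℝ), A * Mᵀ * J2 * M = A * J2 := by
    intro A; simp only [Matrix.mul_assoc, hMJM']
  have hκ : κ - κᵀ = -(X * J2 * Xᵀ) := by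
    have h1 := hsym
    rw [Matrix.IsSymm] at h1
    have h2' : (X * J2 * Xᵀ)ᵀ = -(X * J2 * Xᵀ) := by
      simp [Matrix.transpose_mul, J2_transpose, Matrix.mul_assoc]
    rw [Matrix.transpose_add, Matrix.transpose_smul, h2'] at h1
    ext i j
    have h3 := congrFun (congrFun h1 i) j
    simp [Matrix.add_apply, Matrix.sub_apply, Matrix.smul_apply, Matrix.neg_apply] at h3 ⊢
    linarith
  have e2 : Mᵀ * J2 * (M * J2 * Xᵀ) = -Xᵀ := by
    simp only [← Matrix.mul_assoc]
    rw [hMJM, J2_mul_J2]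
    simp
  have e3 : (-(M * J2 * Xᵀ))ᵀ * J2 * M = -X := by
    simp only [Matrix.transpose_neg, Matrix.transpose_mul, Matrix.transpose_transpose,
      J2_transpose, Matrix.neg_mul, Matrix.mul_neg, neg_neg, ← Matrix.mul_assoc]
    rw [h2 (X * J2), Matrix.mul_assoc, J2_mul_J2]
    simp
  have e4 : (-(M * J2 * Xᵀ))ᵀ * J2 * (M * J2 * Xᵀ) = -(X * J2 * Xᵀ) := by
    simp only [Matrix.transpose_neg, Matrix.transpose_mul, Matrix.transpose_transpose,
      J2_transpose, Matrix.neg_mul, Matrix.mul_neg, neg_neg, ← Matrix.mul_assoc]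
    rw [h2 (X * J2), Matrix.mul_assoc X J2 J2, J2_mul_J2]
    simp [Matrix.mul_assoc]
  have hfin : κ + (X * J2 * Xᵀ + -κᵀ) = 0 := by
    have hr : κ + (X * J2 * Xᵀ + -κᵀ) = (κ - κᵀ) + X * J2 * Xᵀ := by abel
    rw [hr, hκ]; abel
  rw [jIota]
  rw [Matrix.fromBlocks_transpose, Matrix.fromBlocks_multiply, Matrix.fromBlocks_multiply]
  simp only [Matrix.transpose_zero, Matrix.transpose_one, Matrix.mul_zero, Matrix.zero_mul,
    Matrix.mul_one, Matrix.one_mul, add_zero, zero_add,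
    Matrix.transpose_fromCols, Matrix.fromBlocks_transpose]
  simp only [Matrix.fromCols_mul_fromBlocks, Matrix.fromBlocks_mul_fromRows,
    Matrix.fromRows_mul_fromCols, Matrix.fromBlocks_multiply, Matrix.fromBlocks_add,
    Matrix.mul_zero, Matrix.zero_mul, Matrix.mul_one, Matrix.one_mul, add_zero, zero_add,
    Matrix.neg_mul, Matrix.mul_neg]
  rw [hMJM, e2, e3, e4]
  simp only [neg_neg]
  rw [hfin]
  norm_num

/-- There is a permutation of the 2N+2 indices (i.e. a conjugation by a permutation matrix
`P ∈ GL_{2N+2}(ℝ)`) carrying every `ι(M,X,κ)`, `(M,X,κ) ∈ G̃^J_N`, to a symplectic matrix: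
`gᵀ·J_{2N+2}·g = J_{2N+2}`. -/
theorem exists_perm_conj_symplectic (N : ℕ) (hN : 1 ≤ N) :
    ∃ e : (Fin N ⊕ (Fin 2 ⊕ Fin N)) ≃ (Fin (N + 1) ⊕ Fin (N + 1)),
      ∀ g : JTriple N, g.IsMem →
        (Matrix.reindex e e (jIota g)).transpose * Jsymp N * Matrix.reindex e e (jIota g) =
          Jsymp N := by
  refine ⟨jEquiv N, fun g hg => ?_⟩
  have h := key_identity g hg
  rw [← reindex_Jsymp] at h
  rw [show (Jsymp N) = Matrix.reindex (jEquiv N) (jEquiv N)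
      ((Matrix.reindex (jEquiv N).symm (jEquiv N).symm) (Jsymp N)) by simp]
  simp only [Matrix.reindex_apply, Equiv.symm_symm] at h ⊢
  simp only [Matrix.transpose_submatrix, Matrix.submatrix_mul_equiv]
  rw [h]
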